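/- In the graded ring R = ℤ[h, e]/(h⁴, h·e, −e³ + h³), the degree-3 component R₃ is a free abelian group of rank 1 generated by the class of h³, and the degree-1 component R₁ is free of rank 2 generated by h and e. -/
import Mathlib

open MvPolynomial

/-- The defining ideal of the presentation of the Chow ring of the blow-up of `ℙ³` at a
point; variables: `X 0 = h`, `X 1 = e`. -/
noncomputable def pointBlowupIdeal : Ideal (MvPolynomial (Fin 2) ℤ) :=
  Ideal.span {X 0 ^ 4, X 0 * X 1, -X 1 ^ 3 + X 0 ^ 3}

/-- The degree-`d` homogeneous component of `R = ℤ[h,e]/(h⁴, h·e, −e³ + h³)`, where `h` and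
`e` both have degree 1. -/
noncomputable def pointBlowupGrade (d : ℕ) :
    Submodule ℤ (MvPolynomial (Fin 2) ℤ ⧸ pointBlowupIdeal) :=
  Submodule.map (Ideal.Quotient.mkₐ ℤ pointBlowupIdeal).toLinearMap
    (homogeneousSubmodule (Fin 2) ℤ d)

lemma pbi_mem (f : MvPolynomial (Fin 2) ℤ) (hf : f ∈ pointBlowupIdeal) :
    ∃ p q r, f = p * X 0 ^ 4 + q * (X 0 * X 1) + r * (-X 1 ^ 3 + X 0 ^ 3) := by
  rw [pointBlowupIdeal, show ({X 0 ^ 4, X 0 * X 1, -X 1 ^ 3 + X 0 ^ 3} :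
      Set (MvPolynomial (Fin 2) ℤ)) =
      insert (X 0 ^ 4) (insert (X 0 * X 1) {-X 1 ^ 3 + X 0 ^ 3}) from rfl,
    Ideal.mem_span_insert] at hf
  obtain ⟨p, z, hz, rfl⟩ := hf
  rw [Ideal.mem_span_insert] at hz
  obtain ⟨q, w, hw, rfl⟩ := hz
  rw [Ideal.mem_span_singleton'] at hw
  obtain ⟨r, rfl⟩ := hw
  exact ⟨p, q, r, by ring⟩

lemma coeff_zero_of_mem_1 (f : MvPolynomial (Fin 2) ℤ) (hf : f ∈ pointBlowupIdeal)
    (i : Fin 2) : coeff (Finsupp.single i 1) f = 0 := by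
  obtain ⟨p, q, r, rfl⟩ := pbi_mem f hf
  have h01 : X (0 : Fin 2) * X 1 = monomial (R := ℤ)
      (Finsupp.single 0 1 + Finsupp.single 1 1) 1 := by
    rw [X, X, monomial_mul, one_mul]
  simp only [coeff_add, mul_add, mul_neg, coeff_neg, X_pow_eq_monomial, h01,
    coeff_mul_monomial']
  fin_cases i <;>
    simp [Finsupp.le_def, Finsupp.single_apply, Fin.forall_fin_two]

lemma coeff3_of_mem (f : MvPolynomial (Fin 2) ℤ) (hf : f ∈ pointBlowupIdeal) :
    coeff (Finsupp.single 0 3) f + coeff (Finsupp.single 1 3) f = 0 := by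
  obtain ⟨p, q, r, rfl⟩ := pbi_mem f hf
  have h01 : X (0 : Fin 2) * X 1 = monomial (R := ℤ)
      (Finsupp.single 0 1 + Finsupp.single 1 1) 1 := by
    rw [X, X, monomial_mul, one_mul]
  simp only [coeff_add, mul_add, mul_neg, coeff_neg, X_pow_eq_monomial, h01,
    coeff_mul_monomial']
  simp [Finsupp.le_def, Finsupp.single_apply, Fin.forall_fin_two]

lemma smul_mk (c : ℤ) (p : MvPolynomial (Fin 2) ℤ) :
    c • Ideal.Quotient.mk pointBlowupIdeal p =
      Ideal.Quotient.mk pointBlowupIdeal (C c * p) := by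
  rw [zsmul_eq_mul, map_mul, ← map_intCast (Ideal.Quotient.mk pointBlowupIdeal) c]
  norm_cast

lemma monomial_fin2 (v : Fin 2 →₀ ℕ) (c : ℤ) :
    monomial v c = C c * X 0 ^ (v 0) * X 1 ^ (v 1) := by
  have hv : v = Finsupp.single 0 (v 0) + Finsupp.single 1 (v 1) := by
    ext i; fin_cases i <;> simp [Finsupp.single_apply]
  rw [hv, C_apply, X_pow_eq_monomial, X_pow_eq_monomial, monomial_mul, monomial_mul]
  simp

/-- In the graded ring `R = ℤ[h,e]/(h⁴, h·e, −e³ + h³)`, the degree-3 component `R₃` is a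
free abelian group of rank 1 generated by the class of `h³`, and the degree-1 component
`R₁` is free of rank 2 generated by `h` and `e`. -/
theorem point_blowup_graded_components :
    (pointBlowupGrade 3 =
        Submodule.span ℤ {Ideal.Quotient.mk pointBlowupIdeal (X 0 ^ 3)} ∧
      LinearIndependent ℤ ![Ideal.Quotient.mk pointBlowupIdeal (X 0 ^ 3)]) ∧
    (pointBlowupGrade 1 =
        Submodule.span ℤ {Ideal.Quotient.mk pointBlowupIdeal (X 0),
          Ideal.Quotient.mk pointBlowupIdeal (X 1)} ∧
      LinearIndependent ℤ ![Ideal.Quotient.mk pointBlowupIdeal (X 0),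
          Ideal.Quotient.mk pointBlowupIdeal (X 1)]) := by
  set mk := Ideal.Quotient.mk pointBlowupIdeal with hmk
  have hXX : X (0 : Fin 2) * X 1 ∈ pointBlowupIdeal :=
    Ideal.subset_span (by simp)
  have hE : -X (1 : Fin 2) ^ 3 + X 0 ^ 3 ∈ pointBlowupIdeal :=
    Ideal.subset_span (by simp)
  refine ⟨⟨?_, ?_⟩, ?_, ?_⟩
  · apply le_antisymm
    · rintro x ⟨p, hp, rfl⟩
      show mk p ∈ _
      rw [p.as_sum, map_sum]
      refine Submodule.sum_mem _ fun v hv => ?_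
      have hdeg : v 0 + v 1 = 3 := by
        have := hp (mem_support_iff.mp hv)
        simpa [Finsupp.weight_apply, Finsupp.sum_fintype, Fin.sum_univ_two] using this
      rw [monomial_fin2]
      set c := coeff v p
      have h0 : v 0 ≤ 3 := by omega
      interval_cases h : (v 0)
      · -- v 0 = 0, v 1 = 3
        have hv1 : v 1 = 3 := by omega
        rw [hv1]
        have heq : mk (C c * X 0 ^ 0 * X 1 ^ 3) = c • mk (X 0 ^ 3) := by
          rw [smul_mk, Ideal.Quotient.eq]
          convert Ideal.mul_mem_left _ (-C c) hE using 1
          ring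
        rw [heq]
        exact Submodule.smul_mem _ _ (Submodule.mem_span_singleton_self _)
      · -- v 0 = 1, v 1 = 2
        have hv1 : v 1 = 2 := by omega
        rw [hv1]
        have : mk (C c * X 0 ^ 1 * X 1 ^ 2) = 0 := by
          rw [Ideal.Quotient.eq_zero_iff_mem]
          convert Ideal.mul_mem_left _ (C c * X 1) hXX using 1
          ring
        rw [this]; exact Submodule.zero_mem _
      · have hv1 : v 1 = 1 := by omega
        rw [hv1]
        have : mk (C c * X 0 ^ 2 * X 1 ^ 1) = 0 := by
          rw [Ideal.Quotient.eq_zero_iff_mem]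
          convert Ideal.mul_mem_left _ (C c * X 0) hXX using 1
          ring
        rw [this]; exact Submodule.zero_mem _
      · have hv1 : v 1 = 0 := by omega
        rw [hv1]
        have heq : mk (C c * X 0 ^ 3 * X 1 ^ 0) = c • mk (X 0 ^ 3) := by
          rw [smul_mk]; congr 1; ring
        rw [heq]
        exact Submodule.smul_mem _ _ (Submodule.mem_span_singleton_self _)
    · rw [Submodule.span_le, Set.singleton_subset_iff]
      exact ⟨X 0 ^ 3, by simpa using isHomogeneous_X_pow (R := ℤ) (0 : Fin 2) 3, rfl⟩
  · rw [Fintype.linearIndependent_iff]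
    intro g hg i
    fin_cases i
    simp only [Fin.sum_univ_one, Matrix.cons_val_zero] at hg
    rw [smul_mk] at hg
    have hmem := (Ideal.Quotient.eq_zero_iff_mem).mp hg
    have := coeff3_of_mem _ hmem
    have hc : C (g 0) * X (0 : Fin 2) ^ 3 = monomial (Finsupp.single 0 3) (g 0) := by
      rw [X_pow_eq_monomial, C_apply, monomial_mul]; simp
    rw [hc] at this
    simpa [coeff_monomial, Finsupp.single_eq_single_iff] using this
  · apply le_antisymm
    · rintro x ⟨p, hp, rfl⟩
      show mk p ∈ _
      rw [p.as_sum, map_sum]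
      refine Submodule.sum_mem _ fun v hv => ?_
      have hdeg : v 0 + v 1 = 1 := by
        have := hp (mem_support_iff.mp hv)
        simpa [Finsupp.weight_apply, Finsupp.sum_fintype, Fin.sum_univ_two] using this
      rw [monomial_fin2]
      set c := coeff v p
      have h0 : v 0 ≤ 1 := by omega
      interval_cases h : (v 0)
      · have hv1 : v 1 = 1 := by omega
        rw [hv1]
        have heq : mk (C c * X 0 ^ 0 * X 1 ^ 1) = c • mk (X 1) := by
          rw [smul_mk]; congr 1; ring
        rw [heq]
        exact Submodule.smul_mem _ _ (Submodule.subset_span (by simp))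
      · have hv1 : v 1 = 0 := by omega
        rw [hv1]
        have heq : mk (C c * X 0 ^ 1 * X 1 ^ 0) = c • mk (X 0) := by
          rw [smul_mk]; congr 1; ring
        rw [heq]
        exact Submodule.smul_mem _ _ (Submodule.subset_span (by simp))
    · rw [Submodule.span_le]
      rintro x (rfl | rfl)
      · exact ⟨X 0, by simpa using isHomogeneous_X (R := ℤ) (0 : Fin 2), rfl⟩
      · exact ⟨X 1, by simpa using isHomogeneous_X (R := ℤ) (1 : Fin 2), rfl⟩
  · rw [Fintype.linearIndependent_iff]
    intro g hg
    simp only [Fin.sum_univ_two, Matrix.cons_val_zero, Matrix.cons_val_one, Matrix.head_cons]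
      at hg
    rw [smul_mk, smul_mk, ← map_add] at hg
    have hmem := (Ideal.Quotient.eq_zero_iff_mem).mp hg
    have h0 := coeff_zero_of_mem_1 _ hmem 0
    have h1 := coeff_zero_of_mem_1 _ hmem 1
    have hc0 : C (g 0) * X (0 : Fin 2) = monomial (Finsupp.single 0 1) (g 0) := by
      rw [X, C_apply, monomial_mul]; simp
    have hc1 : C (g 1) * X (1 : Fin 2) = monomial (Finsupp.single 1 1) (g 1) := by
      rw [X, C_apply, monomial_mul]; simp
    simp only [hc0, hc1, coeff_add, coeff_monomial, Finsupp.single_eq_single_iff] at h0 h1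
    norm_num at h0 h1
    intro i; fin_cases i <;> simp [h0, h1]
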